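/- Let n ≥ 1 and let m₁,...,mₙ all be odd positive integers. Suppose λ_{i,j} ∈ F₂^{2n} (for 1 ≤ i ≤ n, j ∈ Z/mᵢ) are vectors such that for every tuple j = (j₁,...,jₙ) the 2n×2n matrix with columns λ_{1,j₁}, λ_{1,j₁+1}, ..., λ_{n,jₙ}, λ_{n,jₙ+1} has determinant 1 (indices cyclic mod mᵢ). Then there is no linear functional φ : F₂^{2n} → F₂ with φ(λ_{i,j}) = 1 for all i, j. -/

import Mathlib

/-- Auxiliary for `stmt8`: the determinant of the vertex matrix in which the
column indexed by `c` has been replaced by the fixed vector `e`, and all other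
columns are given by the family `w`. -/
def stmt8T {n : ℕ} (m : Fin n → ℕ) (e : (Fin n × Fin 2) → ZMod 2)
    (w : (i : Fin n) → ZMod (m i) → ((Fin n × Fin 2) → ZMod 2))
    (j : (i : Fin n) → ZMod (m i)) (c : Fin n × Fin 2) : ZMod 2 :=
  (Matrix.of fun (r c' : Fin n × Fin 2) =>
      (if c' = c then e else w c'.1 (j c'.1 + (c'.2.val : ZMod (m c'.1)))) r).det

set_option linter.unreachableTactic false in
set_option linter.unusedTactic false in
/-- Auxiliary for `stmt8`: shifting the distinguished index in the `i`-th
family and flipping which of the two `i`-columns carries `e` amounts to a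
column swap, which does not change the determinant over `F₂`. -/
lemma stmt8swap {n : ℕ} (m : Fin n → ℕ) (e : (Fin n × Fin 2) → ZMod 2)
    (w : (i : Fin n) → ZMod (m i) → ((Fin n × Fin 2) → ZMod 2))
    (j : (i : Fin n) → ZMod (m i)) (i : Fin n) (ε : Fin 2) :
    stmt8T m e w (Function.update j i (j i + (if ε = 0 then (1 : ZMod (m i)) else -1)))
        (i, ε + 1) = stmt8T m e w j (i, ε) := by
  classical
  have hM : (Matrix.of fun (r c' : Fin n × Fin 2) =>
        (if c' = (i, ε + 1) then e
         else w c'.1 ((Function.update j i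
           (j i + (if ε = 0 then (1 : ZMod (m i)) else -1))) c'.1
             + (c'.2.val : ZMod (m c'.1)))) r)
      = (Matrix.of fun (r c' : Fin n × Fin 2) =>
        (if c' = (i, ε) then e
         else w c'.1 (j c'.1 + (c'.2.val : ZMod (m c'.1)))) r).submatrix id
           (Equiv.swap ((i, 0) : Fin n × Fin 2) (i, 1)) := by
    funext r c'
    obtain ⟨i', ε'⟩ := c'
    by_cases hii : i' = i
    · subst hii
      fin_cases ε <;> fin_cases ε' <;>
        simp only [Matrix.submatrix_apply, id_eq, Matrix.of_apply, Fin.mk_zero, Fin.mk_one] <;>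
        (try rw [Equiv.swap_apply_left]) <;> (try rw [Equiv.swap_apply_right]) <;>
        simp [Prod.ext_iff, Function.update_self] <;> ring_nf
    · have h1 : ((i', ε') : Fin n × Fin 2) ≠ (i, 0) := by simp [Prod.ext_iff, hii]
      have h2 : ((i', ε') : Fin n × Fin 2) ≠ (i, 1) := by simp [Prod.ext_iff, hii]
      simp only [Matrix.submatrix_apply, id_eq, Matrix.of_apply]
      rw [Equiv.swap_apply_of_ne_of_ne h1 h2]
      have hj'' : Function.update j i
          (j i + (if ε = 0 then (1 : ZMod (m i)) else -1)) i' = j i' :=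
        Function.update_of_ne hii _ _
      have hne1 : ((i', ε') : Fin n × Fin 2) ≠ (i, ε + 1) := by simp [Prod.ext_iff, hii]
      have hne2 : ((i', ε') : Fin n × Fin 2) ≠ (i, ε) := by simp [Prod.ext_iff, hii]
      simp [hne1, hne2, hj'']
  unfold stmt8T
  rw [hM, Matrix.det_permute', Equiv.Perm.sign_swap (by simp)]
  simp [CharTwo.neg_eq]

set_option maxHeartbeats 1000000 in
/-- non-orientability over products of odd polygons.
Vectors `λ_{i,j} ∈ F₂^{2n}` (coordinates indexed by `Fin n × Fin 2`),
with `j ∈ Z/mᵢ` cyclic and all `mᵢ` odd positive, satisfying the vertex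
nonsingularity condition (every `2n × 2n` vertex matrix with columns
`λ_{1,j₁}, λ_{1,j₁+1}, …, λ_{n,jₙ}, λ_{n,jₙ+1}` has determinant `1`).
Then no linear functional `φ` takes the value `1` on all the `λ_{i,j}`. -/
theorem stmt8 (n : ℕ) (hn : 1 ≤ n) (m : Fin n → ℕ)
    (hpos : ∀ i, 0 < m i) (hodd : ∀ i, Odd (m i))
    (lam : (i : Fin n) → ZMod (m i) → ((Fin n × Fin 2) → ZMod 2))
    (hdet : ∀ j : (i : Fin n) → ZMod (m i),
      (Matrix.of fun (r c : Fin n × Fin 2) =>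
        lam c.1 (j c.1 + (c.2.val : ZMod (m c.1))) r).det = 1) :
    ¬ ∃ φ : ((Fin n × Fin 2) → ZMod 2) →ₗ[ZMod 2] ZMod 2,
        ∀ (i : Fin n) (j : ZMod (m i)), φ (lam i j) = 1 := by
  rintro ⟨φ, hφ⟩
  haveI : ∀ i, NeZero (m i) := fun i => ⟨(hpos i).ne'⟩
  set e : (Fin n × Fin 2) → ZMod 2 := lam ⟨0, hn⟩ 0 with he_def
  have he : φ e = 1 := hφ _ _
  set w : (i : Fin n) → ZMod (m i) → ((Fin n × Fin 2) → ZMod 2) :=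
    fun i j => lam i j - e with hw_def
  have hwφ : ∀ i j, φ (w i j) = 0 := by
    intro i j; simp [hw_def, map_sub, hφ, he]
  have hlam : ∀ i j, lam i j = e + w i j := by
    intro i j; simp [hw_def]
  -- any matrix whose columns are all killed by φ has zero determinant
  have hker : ∀ (M : Matrix (Fin n × Fin 2) (Fin n × Fin 2) (ZMod 2)),
      (∀ c, φ (fun r => M r c) = 0) → M.det = 0 := by
    intro M hM
    rw [← Matrix.exists_vecMul_eq_zero_iff]
    refine ⟨fun r => φ (fun c => if r = c then 1 else 0), ?_, ?_⟩
    · intro h0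
      have he0 : φ e = 0 := by
        rw [LinearMap.pi_apply_eq_sum_univ φ e]
        refine Finset.sum_eq_zero fun r _ => ?_
        have := congrFun h0 r
        simp only [Pi.zero_apply] at this
        rw [this, smul_zero]
      rw [he] at he0; exact one_ne_zero he0
    · funext c
      have := LinearMap.pi_apply_eq_sum_univ φ (fun r => M r c)
      rw [hM c] at this
      simp only [Matrix.vecMul, dotProduct, Pi.zero_apply]
      calc ∑ x : Fin n × Fin 2, (φ fun c' => if x = c' then 1 else 0) * M x c
          = ∑ x : Fin n × Fin 2, M x c • φ (fun c' => if x = c' then 1 else 0) :=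
            Finset.sum_congr rfl fun r _ => by rw [smul_eq_mul, mul_comm]
        _ = 0 := this.symm
  classical
  let D := (Matrix.detRowAlternating :
    ((Fin n × Fin 2) → ZMod 2) [⋀^(Fin n × Fin 2)]→ₗ[ZMod 2] ZMod 2)
  -- expansion of each vertex determinant using multilinearity
  have hexp : ∀ j : (i : Fin n) → ZMod (m i), (1 : ZMod 2) = ∑ c, stmt8T m e w j c := by
    intro j
    rw [← hdet j]
    set E : (Fin n × Fin 2) → ((Fin n × Fin 2) → ZMod 2) := fun _ => e with hE
    set W : (Fin n × Fin 2) → ((Fin n × Fin 2) → ZMod 2) :=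
      fun c => w c.1 (j c.1 + (c.2.val : ZMod (m c.1))) with hW
    have h1 : (Matrix.of fun (r c : Fin n × Fin 2) =>
        lam c.1 (j c.1 + (c.2.val : ZMod (m c.1))) r).det = D (E + W) := by
      rw [show D (E + W) = (Matrix.of (E + W)).det from rfl, ← Matrix.det_transpose]
      congr 1
      funext r c
      simp [Matrix.transpose, hlam, hE, hW]
    have h2 : D (E + W) = ∑ s : Finset (Fin n × Fin 2), D (s.piecewise E W) :=
      D.toMultilinearMap.map_add_univ E W
    have h0 : ∀ s : Finset (Fin n × Fin 2), s.card ≠ 1 → D (s.piecewise E W) = 0 := by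
      intro s hs
      rcases s.eq_empty_or_nonempty with rfl | hne
      · -- all columns lie in the kernel of φ
        have hDW : D (Finset.piecewise ∅ E W)
            = (Matrix.transpose (Matrix.of fun c r => W c r)).det := by
          rw [Matrix.det_transpose]; rfl
        rw [hDW]
        exact hker _ fun c => hwφ _ _
      · have h2le : 1 < s.card := lt_of_le_of_ne hne.card_pos (Ne.symm hs)
        obtain ⟨a, b, ha, hb, hab⟩ := Finset.one_lt_card_iff.mp h2le
        refine D.map_eq_zero_of_eq _ ?_ hab
        rw [Finset.piecewise_eq_of_mem _ _ _ ha, Finset.piecewise_eq_of_mem _ _ _ hb]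
    have h3 : ∑ s : Finset (Fin n × Fin 2), D (s.piecewise E W)
        = ∑ c : Fin n × Fin 2, D (({c} : Finset _).piecewise E W) := by
      have himg : ∑ c : Fin n × Fin 2, D (({c} : Finset _).piecewise E W)
          = ∑ s ∈ Finset.univ.image (fun c : Fin n × Fin 2 => ({c} : Finset _)),
              D (s.piecewise E W) :=
        (Finset.sum_image (s := Finset.univ)
          (g := fun c : Fin n × Fin 2 => ({c} : Finset (Fin n × Fin 2)))
          (f := fun s => D (s.piecewise E W))
          (by intro x _ y _ hxy; exact Finset.singleton_injective hxy)).symm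
      rw [himg]
      refine (Finset.sum_subset (Finset.subset_univ _) fun s _ hs => h0 s fun hcard => ?_).symm
      obtain ⟨a, rfl⟩ := Finset.card_eq_one.mp hcard
      exact hs (Finset.mem_image_of_mem _ (Finset.mem_univ a))
    rw [h1, h2, h3]
    refine Finset.sum_congr rfl fun c _ => ?_
    show D _ = stmt8T m e w j c
    have hpw : ({c} : Finset _).piecewise E W
        = fun c' => if c' = c then e else w c'.1 (j c'.1 + (c'.2.val : ZMod (m c'.1))) := by
      funext c'
      by_cases h : c' = c <;> simp [Finset.piecewise, h, hW, hE]
    have hT : stmt8T m e w j c = D (fun c' =>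
        if c' = c then e else w c'.1 (j c'.1 + (c'.2.val : ZMod (m c'.1)))) :=
      Matrix.det_transpose _
    rw [hpw]
    exact hT.symm
  -- the double sum vanishes via a fixed-point-free involution
  have hflip : ∀ ε : Fin 2, ε + 1 ≠ ε := by decide
  have hsum0 : (∑ p : (((i : Fin n) → ZMod (m i)) × (Fin n × Fin 2)),
      stmt8T m e w p.1 p.2) = 0 := by
    refine Finset.sum_ninvolution
      (fun p => (Function.update p.1 p.2.1
        (p.1 p.2.1 + (if p.2.2 = 0 then (1 : ZMod (m p.2.1)) else -1)),
        (p.2.1, p.2.2 + 1))) ?_ ?_ (fun _ => Finset.mem_univ _) ?_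
    · rintro ⟨j, i, ε⟩
      rw [stmt8swap m e w j i ε]
      exact CharTwo.add_self_eq_zero _
    · rintro ⟨j, i, ε⟩ _
      exact fun h => hflip ε (congrArg (fun q => q.2.2) h)
    · rintro ⟨j, i, ε⟩
      dsimp only
      refine Prod.ext ?_ (Prod.ext rfl ?_)
      · funext i'
        dsimp only
        by_cases hii : i' = i
        · subst hii
          rw [Function.update_self]
          fin_cases ε <;> simp
        · rw [Function.update_of_ne hii, Function.update_of_ne hii]
      · show ε + 1 + 1 = ε
        fin_cases ε <;> decide
  -- but it also equals the number of vertices, which is odd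
  have hcard : ((Fintype.card ((i : Fin n) → ZMod (m i)) : ℕ) : ZMod 2) = 1 := by
    have h1 : Fintype.card ((i : Fin n) → ZMod (m i)) = ∏ i, m i := by
      rw [Fintype.card_pi]
      exact Finset.prod_congr rfl fun i _ => ZMod.card (m i)
    have h2 : Odd (∏ i, m i) :=
      Finset.prod_induction _ Odd (fun a b => Odd.mul) odd_one fun i _ => hodd i
    obtain ⟨k, hk⟩ := h2
    rw [h1, hk]
    push_cast
    rw [show ((2 : ZMod 2)) = 0 from rfl]
    ring
  have hone : (1 : ZMod 2) = 0 := by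
    calc (1 : ZMod 2)
        = ∑ _j : (i : Fin n) → ZMod (m i), (1 : ZMod 2) := by
          rw [Finset.sum_const, Finset.card_univ, nsmul_eq_mul, mul_one, hcard]
      _ = ∑ j : (i : Fin n) → ZMod (m i), ∑ c, stmt8T m e w j c :=
          Finset.sum_congr rfl fun j _ => hexp j
      _ = ∑ p : (((i : Fin n) → ZMod (m i)) × (Fin n × Fin 2)),
            stmt8T m e w p.1 p.2 := by
          rw [← Fintype.sum_prod_type']
      _ = 0 := hsum0
  exact one_ne_zero hone
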